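/- Let q0 be an odd prime power with q0 ≡ 7 (mod 8), let F be a finite field with q0² elements, K the unique subfield of F with q0 elements, and H the unique subgroup of Fˣ of order q0+1. Then: (1) every μ ∈ F can be written as μ = c1·h1 + c2·h2 with c1, c2 ∈ K and h1, h2 ∈ H; and (2) there exists μ ∈ F such that μ ≠ c·h for all c ∈ K and h ∈ H. Equivalently, the covering radius of the generalized Zetterberg code C_1(q0) is exactly 2. -/

import Mathlib

open Polynomial Finset

section AuxZetterberg

variable {F : Type*} [Field F] [Fintype F]

omit [Fintype F] in
private lemma aux_mem_of_pow_eq (n : ℕ) (hn : 1 < n) (S : Finset F)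
    (hS : ∀ x ∈ S, x ^ n = x) (hcard : n ≤ S.card) :
    ∀ x : F, x ^ n = x → x ∈ S := by
  classical
  intro x hx
  have hdlt : (X : F[X]).degree < (X ^ n : F[X]).degree := by
    rw [degree_X, degree_X_pow]
    exact_mod_cast hn
  have hdeg : (X ^ n - X : F[X]).degree = n := by
    rw [degree_sub_eq_left_of_degree_lt hdlt, degree_X_pow]
  have hpne : (X ^ n - X : F[X]) ≠ 0 := by
    intro h
    rw [h, degree_zero] at hdeg
    exact absurd hdeg.symm (by simp)
  have hroot : ∀ y : F, y ^ n = y → y ∈ (X ^ n - X : F[X]).roots.toFinset := by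
    intro y hy
    rw [Multiset.mem_toFinset, mem_roots hpne]
    simp [IsRoot, hy]
  have hsub : S ⊆ (X ^ n - X : F[X]).roots.toFinset := fun y hy => hroot y (hS y hy)
  have hcard2 : ((X ^ n - X : F[X]).roots.toFinset).card ≤ n := by
    refine le_trans (Multiset.toFinset_card_le _) ?_
    have h1 := Polynomial.card_roots' (X ^ n - X : F[X])
    have h2 : (X ^ n - X : F[X]).natDegree = n := natDegree_eq_of_degree_eq_some hdeg
    omega
  have hSeq : S = (X ^ n - X : F[X]).roots.toFinset :=
    Finset.eq_of_subset_of_card_le hsub (le_trans hcard2 hcard)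
  rw [hSeq]
  exact hroot x hx

/-- Elements of `K` satisfy `x ^ q0 = x`. -/
private lemma aux_K_pow (q0 : ℕ) (K : Subfield F) (hK : Nat.card K = q0) :
    ∀ x ∈ K, x ^ q0 = x := by
  intro x hx
  haveI : Fintype K := Fintype.ofFinite K
  have h1 : (⟨x, hx⟩ : K) ^ (Fintype.card K) = ⟨x, hx⟩ := FiniteField.pow_card _
  have h2 : Fintype.card K = q0 := by rw [← Nat.card_eq_fintype_card, hK]
  rw [h2] at h1
  have := congrArg (Subtype.val) h1
  push_cast at this
  exact this

/-- Every solution of `x ^ q0 = x` lies in the subfield `K` of cardinality `q0`. -/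
private lemma aux_mem_K (q0 : ℕ) (hq : 1 < q0) (K : Subfield F) (hK : Nat.card K = q0) :
    ∀ x : F, x ^ q0 = x → x ∈ K := by
  classical
  have hKcard : (Finset.univ.filter (fun x : F => x ∈ K)).card = q0 := by
    rw [← Fintype.card_subtype]
    rw [← hK]
    exact (Nat.card_eq_fintype_card).symm
  intro x hx
  have := aux_mem_of_pow_eq q0 hq (Finset.univ.filter (fun x : F => x ∈ K))
    (fun y hy => aux_K_pow q0 K hK y (by simpa using hy)) (le_of_eq hKcard.symm) x hx
  simpa using this

/-- Elements of the subgroup `H` of order `q0 + 1` satisfy `h ^ (q0+1) = 1`. -/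
private lemma aux_H_pow (q0 : ℕ) (H : Subgroup Fˣ) (hH : Nat.card H = q0 + 1) :
    ∀ u : Fˣ, u ∈ H → (u : F) ^ (q0 + 1) = 1 := by
  intro u hu
  haveI : Fintype H := Fintype.ofFinite H
  have h1 : (⟨u, hu⟩ : H) ^ (Fintype.card H) = 1 := pow_card_eq_one
  have h2 : Fintype.card H = q0 + 1 := by rw [← Nat.card_eq_fintype_card, hH]
  rw [h2] at h1
  have h3 : u ^ (q0 + 1) = 1 := by
    have := congrArg (Subtype.val) h1
    push_cast at this
    exact_mod_cast this
  calc (u : F) ^ (q0 + 1) = ((u ^ (q0 + 1) : Fˣ) : F) := by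
        rw [Units.val_pow_eq_pow_val]
    _ = 1 := by rw [h3]; rfl

/-- Every unit with `(u : F) ^ (q0+1) = 1` lies in the subgroup `H` of order `q0+1`. -/
private lemma aux_mem_H (q0 : ℕ) (hq : 0 < q0) (H : Subgroup Fˣ) (hH : Nat.card H = q0 + 1) :
    ∀ u : Fˣ, (u : F) ^ (q0 + 1) = 1 → u ∈ H := by
  classical
  intro u hu
  set S : Finset F := (Finset.univ.filter (fun v : Fˣ => v ∈ H)).image Units.val with hSdef
  have hS : ∀ x ∈ S, x ^ (q0 + 2) = x := by
    intro x hx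
    rw [hSdef] at hx
    obtain ⟨v, hv, rfl⟩ := Finset.mem_image.mp hx
    have : ((v : F)) ^ (q0 + 2) = (v : F) ^ (q0 + 1) * (v : F) := by ring
    rw [this, aux_H_pow q0 H hH v (by simpa using hv), one_mul]
  have hfiltercard : (Finset.univ.filter (fun v : Fˣ => v ∈ H)).card = q0 + 1 := by
    rw [← Fintype.card_subtype]
    rw [← hH]
    exact (Nat.card_eq_fintype_card).symm
  have hcard : q0 + 1 ≤ S.card := by
    rw [hSdef, Finset.card_image_of_injective _ (fun _ _ h => Units.ext h), hfiltercard]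
  -- 0 ∈? no: all elements of S are units, nonzero; add 0 to S to get q0+2 elements
  have h0 : (0 : F) ∉ S := by
    rw [hSdef]
    intro h
    obtain ⟨v, _, hv⟩ := Finset.mem_image.mp h
    exact v.ne_zero hv
  have hS' : ∀ x ∈ insert (0 : F) S, x ^ (q0 + 2) = x := by
    intro x hx
    rcases Finset.mem_insert.mp hx with h | h
    · rw [h]; rw [zero_pow]; omega
    · exact hS x h
  have hcard' : q0 + 2 ≤ (insert (0 : F) S).card := by
    rw [Finset.card_insert_of_notMem h0]
    omega
  have hx2 : u.val ^ (q0 + 2) = u.val := by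
    have : ((u : F)) ^ (q0 + 2) = (u : F) ^ (q0 + 1) * (u : F) := by ring
    rw [this, hu, one_mul]
  have hmem := aux_mem_of_pow_eq (q0 + 2) (by omega) (insert (0 : F) S) hS' hcard'
    (u : F) hx2
  rcases Finset.mem_insert.mp hmem with h | h
  · exact absurd h u.ne_zero
  · rw [hSdef] at h
    obtain ⟨v, hv, hveq⟩ := Finset.mem_image.mp h
    have : v = u := Units.ext hveq
    rw [← this]
    simpa using hv

end AuxZetterberg

section Aux2

variable {F : Type*} [Field F] [Fintype F]

/-- Every square in `F` is of the form `c * h` with `c ∈ K`, `h ∈ H`. -/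
private lemma aux_rep (q0 : ℕ) (hq : 7 ≤ q0)
    (hF : Fintype.card F = q0 ^ 2) (K : Subfield F) (hK : Nat.card K = q0)
    (H : Subgroup Fˣ) (hH : Nat.card H = q0 + 1) (x : F) (hx : IsSquare x) :
    ∃ c : F, c ∈ K ∧ ∃ h : Fˣ, h ∈ H ∧ x = c * h := by
  obtain ⟨y, rfl⟩ := hx
  by_cases hy : y = 0
  · exact ⟨0, K.zero_mem, 1, H.one_mem, by simp [hy]⟩
  · set yu : Fˣ := Units.mk0 y hy with hyu
    have hyq : y ^ (q0 ^ 2) = y := by rw [← hF]; exact FiniteField.pow_card y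
    have hcq : (y ^ (q0 + 1)) ^ q0 = y ^ (q0 + 1) := by
      rw [← pow_mul]
      have h1 : (q0 + 1) * q0 = q0 ^ 2 + q0 := by ring
      rw [h1, pow_add, hyq, ← pow_succ']
    have hcK : y ^ (q0 + 1) ∈ K := aux_mem_K q0 (by omega) K hK _ hcq
    set cu : Fˣ := yu ^ (q0 + 1) with hcu
    have hcuval : (cu : F) = y ^ (q0 + 1) := by
      rw [hcu, Units.val_pow_eq_pow_val]; rfl
    have hcufix : cu ^ q0 = cu :=
      Units.ext (by rw [Units.val_pow_eq_pow_val, hcuval]; exact hcq)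
    set hu : Fˣ := yu * yu * cu⁻¹ with hhu
    have hhuH : hu ∈ H := by
      apply aux_mem_H q0 (by omega) H hH
      have hpow : hu ^ (q0 + 1) = 1 := by
        rw [hhu, mul_pow, mul_pow, inv_pow]
        have h2 : cu ^ (q0 + 1) = cu * cu := by rw [pow_succ, hcufix]
        rw [h2, hcu]
        group
      rw [← Units.val_pow_eq_pow_val, hpow, Units.val_one]
    refine ⟨y ^ (q0 + 1), hcK, hu, hhuH, ?_⟩
    have hcne : y ^ (q0 + 1) ≠ 0 := pow_ne_zero _ hy
    have hhuval : (hu : F) = y * y * (y ^ (q0 + 1))⁻¹ := by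
      rw [hhu]
      simp only [Units.val_mul, Units.val_inv_eq_inv_val, hcuval, hyu, Units.val_mk0]
    rw [hhuval, mul_comm (y ^ (q0 + 1)), mul_assoc, inv_mul_cancel₀ hcne, mul_one]

/-- Every product `c * h` with `c ∈ K`, `h ∈ H` is a square in `F`. -/
private lemma aux_sq (q0 m : ℕ) (hm : q0 = 2 * m + 1) (hq : 7 ≤ q0)
    (hF : Fintype.card F = q0 ^ 2) (hchar : ringChar F ≠ 2)
    (K : Subfield F) (hK : Nat.card K = q0)
    (H : Subgroup Fˣ) (hH : Nat.card H = q0 + 1)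
    (c : F) (hc : c ∈ K) (h : Fˣ) (hh : h ∈ H) : IsSquare (c * (h : F)) := by
  by_cases hc0 : c = 0
  · exact ⟨0, by simp [hc0]⟩
  have hhalf : Fintype.card F / 2 = 2 * m * (m + 1) := by
    rw [hF, hm]
    have he : (2 * m + 1) ^ 2 = 2 * (2 * m * (m + 1)) + 1 := by ring
    rw [he]
    omega
  have hcq : c ^ (2 * m) * c = c := by
    have h1 := aux_K_pow q0 K hK c hc
    rw [hm] at h1
    rw [← pow_succ]
    exact h1
  have hc2m : c ^ (2 * m) = 1 := mul_right_cancel₀ hc0 (by rw [hcq, one_mul])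
  have hcsq : IsSquare c := by
    rw [FiniteField.isSquare_iff hchar hc0, hhalf]
    have he : 2 * m * (m + 1) = 2 * m * (m + 1) := rfl
    rw [pow_mul, hc2m, one_pow]
  have hhsq : IsSquare ((h : F)) := by
    rw [FiniteField.isSquare_iff hchar h.ne_zero, hhalf]
    have h1 := aux_H_pow q0 H hH h hh
    rw [hm] at h1
    have he : 2 * m * (m + 1) = (2 * m + 1 + 1) * m := by ring
    rw [he, pow_mul, h1, one_pow]
  exact hcsq.mul hhsq

end Aux2

/-- For `q0 ≡ 7 (mod 8)` an odd prime power, the covering radius of the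
generalized Zetterberg code `C_1(q0)` is exactly `2`: every `μ ∈ F` is of the
form `c1·h1 + c2·h2` with `ci ∈ K`, `hi ∈ H`, and some `μ ∈ F` is not of the
form `c·h`. -/
theorem covering_radius_eq_two_of_s_eq_one (q0 : ℕ) (hq0 : IsPrimePow q0)
    (hq0odd : Odd q0) (hq07 : q0 % 8 = 7)
    (F : Type*) [Field F] [Fintype F] (hF : Fintype.card F = q0 ^ 2)
    (K : Subfield F) (hK : Nat.card K = q0)
    (H : Subgroup Fˣ) (hH : Nat.card H = q0 + 1) :
    (∀ μ : F, ∃ c1 c2 : F, c1 ∈ K ∧ c2 ∈ K ∧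
        ∃ h1 h2 : Fˣ, h1 ∈ H ∧ h2 ∈ H ∧ μ = c1 * (h1 : F) + c2 * (h2 : F)) ∧
      (∃ μ : F, ∀ c : F, c ∈ K → ∀ h : Fˣ, h ∈ H → μ ≠ c * (h : F)) := by
  classical
  obtain ⟨m, hm⟩ := hq0odd
  have hm' : q0 = 2 * m + 1 := by omega
  have hq7 : 7 ≤ q0 := by omega
  have hodd : Fintype.card F % 2 = 1 := by
    rw [hF, hm']
    have he : (2 * m + 1) ^ 2 = 2 * (2 * m * (m + 1)) + 1 := by ring
    rw [he]
    omega
  have hchar : ringChar F ≠ 2 := by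
    intro h2
    have := FiniteField.even_card_of_char_two h2
    omega
  constructor
  · intro μ
    have hf2 : (X ^ 2 - C μ : F[X]).degree = 2 := by
      exact_mod_cast Polynomial.degree_X_pow_sub_C (n := 2) (by norm_num) μ
    have hg2 : (X ^ 2 : F[X]).degree = 2 := by simp
    obtain ⟨a, b, hab⟩ := FiniteField.exists_root_sum_quadratic hf2 hg2 hodd
    simp only [eval_sub, eval_pow, eval_X, eval_C] at hab
    have hμ : μ = a * a + b * b := by ring_nf; ring_nf at hab; linear_combination -hab
    obtain ⟨c1, hc1, h1, hh1, he1⟩ :=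
      aux_rep q0 hq7 hF K hK H hH (a * a) ⟨a, rfl⟩
    obtain ⟨c2, hc2, h2, hh2, he2⟩ :=
      aux_rep q0 hq7 hF K hK H hH (b * b) ⟨b, rfl⟩
    exact ⟨c1, c2, hc1, hc2, h1, h2, hh1, hh2, by rw [hμ, he1, he2]⟩
  · obtain ⟨μ, hμ⟩ := FiniteField.exists_nonsquare hchar
    refine ⟨μ, fun c hc h hh heq => hμ ?_⟩
    rw [heq]
    exact aux_sq q0 m hm' hq7 hF hchar K hK H hH c hc h hh
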